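/- Let d ≥ 1, ρ > 0 and r > 1. Define, for x ∈ (0,∞)^d, κ_i(x) = log(1+x_i) / (ρ max_{j=1,…,d} log(1+x_j)) and T(x) = (x_1 r^{κ_1(x)}, …, x_d r^{κ_d(x)}). Let x ∈ (0,∞)^d be a point at which the maximum max_j x_j is attained at a unique index. Then T is differentiable at x and the absolute value of the determinant of its derivative equals J(x) = [∏_{i=1}^d J̃_i(x)] · r^{Σ_{i=1}^d κ_i(x)} / max_{i=1,…,d} J̃_i(x), where J̃_i(x) = 1 + (ρ^{−1} log r / max_j log(1+x_j)) · (x_i/(1+x_i)). -/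

import Mathlib

open MeasureTheory Filter Real Topology

theorem stmt9
    (d : ℕ) (hd : 1 ≤ d) (ρ r : ℝ) (hρ : 0 < ρ) (hr : 1 < r)
    (x : Fin d → ℝ) (hx : ∀ i, 0 < x i)
    (i₀ : Fin d) (hmax : ∀ j : Fin d, j ≠ i₀ → x j < x i₀) :
    ∃ D : (Fin d → ℝ) →L[ℝ] (Fin d → ℝ),
      HasFDerivAt
        (fun y : Fin d → ℝ => fun i : Fin d =>
          y i * r ^ (Real.log (1 + y i) / (ρ * ⨆ j, Real.log (1 + y j)))) D x ∧
      |D.det| =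
        (∏ i, (1 + (ρ⁻¹ * Real.log r / ⨆ j, Real.log (1 + x j)) * (x i / (1 + x i)))) *
          r ^ (∑ i, Real.log (1 + x i) / (ρ * ⨆ j, Real.log (1 + x j))) /
          (⨆ i, (1 + (ρ⁻¹ * Real.log r / ⨆ j, Real.log (1 + x j)) * (x i / (1 + x i)))) := by
  have hne : Nonempty (Fin d) := ⟨i₀⟩
  have hr0 : (0:ℝ) < r := by linarith
  have hc : 0 < Real.log r := Real.log_pos hr
  have hx1 : ∀ i, (0:ℝ) < 1 + x i := fun i => by linarith [hx i]
  have hm : 0 < Real.log (1 + x i₀) := Real.log_pos (by linarith [hx i₀])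
  -- the sup of logs at x
  have hS : (⨆ j, Real.log (1 + x j)) = Real.log (1 + x i₀) := by
    refine le_antisymm (ciSup_le fun j => ?_)
      (le_ciSup (f := fun j => Real.log (1 + x j))
        (Set.Finite.bddAbove (Set.finite_range _)) i₀)
    rcases eq_or_ne j i₀ with h | h
    · rw [h]
    · exact Real.log_le_log (hx1 j) (by linarith [hmax j h])
  -- canonical atoms
  set E : Fin d → ℝ := fun i =>
    Real.exp (Real.log r / ρ * (Real.log (1 + x i) * (Real.log (1 + x i₀))⁻¹)) with hE_def
  have hEpos : ∀ i, 0 < E i := fun i => Real.exp_pos _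
  set Jt : Fin d → ℝ := fun i =>
    1 + ρ⁻¹ * Real.log r / Real.log (1 + x i₀) * (x i / (1 + x i)) with hJt_def
  have hJtpos : ∀ i, 0 < Jt i := by
    intro i
    have h1 : 0 ≤ ρ⁻¹ * Real.log r / Real.log (1 + x i₀) * (x i / (1 + x i)) := by
      apply mul_nonneg
      · exact div_nonneg (mul_nonneg (inv_nonneg.mpr hρ.le) hc.le) hm.le
      · exact div_nonneg (hx i).le (hx1 i).le
    simp only [hJt_def]
    linarith
  set W : Fin d → ℝ := fun i =>
    -(x i * E i * (Real.log r / ρ) * Real.log (1 + x i) *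
      ((Real.log (1 + x i₀))⁻¹ * (1 + x i₀)⁻¹ * (Real.log (1 + x i₀))⁻¹)) with hW_def
  set A : Matrix (Fin d) (Fin d) ℝ := fun i k =>
    (if k = i then E i * Jt i else 0) + (if k = i₀ then W i else 0) with hA_def
  set D : (Fin d → ℝ) →L[ℝ] (Fin d → ℝ) :=
    LinearMap.toContinuousLinearMap (Matrix.toLin' A) with hD_def
  have hDapp : ∀ v : Fin d → ℝ, ∀ i, D v i = E i * Jt i * v i + W i * v i₀ := by
    intro v i
    rw [hD_def]
    show (LinearMap.toContinuousLinearMap (Matrix.toLin' A)) v i = _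
    rw [show ⇑(LinearMap.toContinuousLinearMap (Matrix.toLin' A)) = ⇑(Matrix.toLin' A) from
      LinearMap.coe_toContinuousLinearMap' _]
    rw [Matrix.toLin'_apply]
    simp only [Matrix.mulVec, dotProduct, hA_def, add_mul, ite_mul, zero_mul,
      Finset.sum_add_distrib, Finset.sum_ite_eq', Finset.mem_univ, if_true]
  refine ⟨D, ?_, ?_⟩
  · -- differentiability
    have hG : HasFDerivAt (fun y : Fin d → ℝ => fun i : Fin d =>
        y i * Real.exp (Real.log r / ρ *
          (Real.log (1 + y i) * (Real.log (1 + y i₀))⁻¹))) D x := by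
      rw [hasFDerivAt_pi']
      intro i
      have hli : HasFDerivAt (fun y : Fin d → ℝ => Real.log (1 + y i))
          ((1 + x i)⁻¹ • ContinuousLinearMap.proj i) x :=
        ((hasFDerivAt_apply i x).const_add 1).log (hx1 i).ne'
      have hli₀ : HasFDerivAt (fun y : Fin d → ℝ => Real.log (1 + y i₀))
          ((1 + x i₀)⁻¹ • ContinuousLinearMap.proj i₀) x :=
        ((hasFDerivAt_apply i₀ x).const_add 1).log (hx1 i₀).ne'
      have hinv : HasFDerivAt (fun y : Fin d → ℝ => (Real.log (1 + y i₀))⁻¹)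
          ((-(ContinuousLinearMap.mulLeftRight ℝ ℝ (Real.log (1 + x i₀))⁻¹
              (Real.log (1 + x i₀))⁻¹)).comp
            ((1 + x i₀)⁻¹ • ContinuousLinearMap.proj i₀)) x :=
        (hasFDerivAt_inv' hm.ne').comp x hli₀
      have hprod := hli.mul hinv
      have hexp := (hprod.const_mul (Real.log r / ρ)).exp
      have hmul := (hasFDerivAt_apply i x).mul hexp
      convert hmul using 1
      · rfl
      · rfl
      ext v
      simp only [ContinuousLinearMap.comp_apply, ContinuousLinearMap.proj_apply]
      rw [hDapp]
      simp only [ContinuousLinearMap.add_apply, ContinuousLinearMap.coe_smul',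
        Pi.smul_apply, ContinuousLinearMap.proj_apply, ContinuousLinearMap.neg_apply,
        ContinuousLinearMap.comp_apply, ContinuousLinearMap.mulLeftRight_apply,
        smul_eq_mul]
      simp only [hE_def, hJt_def, hW_def, Pi.mul_apply]
      ring
    refine hG.congr_of_eventuallyEq ?_
    have hev : ∀ᶠ y in nhds x, ∀ j, 0 < y j ∧ (j ≠ i₀ → y j < y i₀) := by
      rw [Filter.eventually_all]
      intro j
      have h1 : ∀ᶠ y in nhds x, 0 < y j :=
        ((continuous_apply j).tendsto x).eventually (eventually_gt_nhds (hx j))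
      rcases eq_or_ne j i₀ with h | h
      · filter_upwards [h1] with y hy
        exact ⟨hy, fun hj => absurd h hj⟩
      · have h2 : ∀ᶠ y in nhds x, y j < y i₀ :=
          ContinuousAt.eventually_lt (continuous_apply j).continuousAt
            (continuous_apply i₀).continuousAt (hmax j h)
        filter_upwards [h1, h2] with y hy1 hy2
        exact ⟨hy1, fun _ => hy2⟩
    filter_upwards [hev] with y hy
    funext i
    have hy1 : ∀ j, (0:ℝ) < 1 + y j := fun j => by linarith [(hy j).1]
    have hmy : 0 < Real.log (1 + y i₀) := Real.log_pos (by linarith [(hy i₀).1])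
    have hSy : (⨆ j, Real.log (1 + y j)) = Real.log (1 + y i₀) := by
      refine le_antisymm (ciSup_le fun j => ?_)
        (le_ciSup (f := fun j => Real.log (1 + y j))
          (Set.Finite.bddAbove (Set.finite_range _)) i₀)
      rcases eq_or_ne j i₀ with h | h
      · rw [h]
      · exact Real.log_le_log (hy1 j) (by linarith [(hy j).2 h])
    rw [hSy, Real.rpow_def_of_pos hr0]
    rw [show Real.log r * (Real.log (1 + y i) / (ρ * Real.log (1 + y i₀)))
        = Real.log r / ρ * (Real.log (1 + y i) * (Real.log (1 + y i₀))⁻¹) from by ring]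
  · -- determinant computation
    have hdet : D.det = A.det := by
      rw [hD_def]
      unfold ContinuousLinearMap.det
      rw [LinearMap.coe_toContinuousLinearMap, LinearMap.det_toLin']
    have htopmem : d - 1 < d := by omega
    set top : Fin d := ⟨d - 1, htopmem⟩ with htop_def
    have htop : ∀ k : Fin d, k ≤ top := fun k => by
      rw [Fin.le_def]
      have := k.2
      simp only [htop_def]
      omega
    set e : Equiv.Perm (Fin d) := Equiv.swap i₀ top with he_def
    have hBT : (A.submatrix e e).BlockTriangular id := by
      intro i j hij
      have hij' : j < i := hij
      have h1 : e j ≠ e i := fun h => absurd (e.injective h) (ne_of_lt hij')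
      have h2 : e j ≠ i₀ := by
        intro h
        have het : e top = i₀ := Equiv.swap_apply_right i₀ top
        have hj : j = top := e.injective (h.trans het.symm)
        rw [hj] at hij'
        exact absurd hij' (not_lt.mpr (htop i))
      simp [Matrix.submatrix_apply, Matrix.submatrix, hA_def, h1, h2, ne_of_lt hij']
    have hdetA : A.det = ∏ j, A j j := by
      rw [← Matrix.det_submatrix_equiv_self e A]
      rw [Matrix.det_of_upperTriangular hBT]
      exact Equiv.prod_comp e (fun j => A j j)
    have hAii : ∀ j, j ≠ i₀ → A j j = E j * Jt j := by
      intro j hj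
      simp [hA_def, hj]
    have hAi₀ : A i₀ i₀ = E i₀ := by
      have h0 : A i₀ i₀ = E i₀ * Jt i₀ + W i₀ := by simp [hA_def]
      rw [h0]
      simp only [hJt_def, hW_def]
      rw [show -(x i₀ * E i₀ * (Real.log r / ρ) * Real.log (1 + x i₀) *
          ((Real.log (1 + x i₀))⁻¹ * (1 + x i₀)⁻¹ * (Real.log (1 + x i₀))⁻¹))
          = -(E i₀ * (ρ⁻¹ * Real.log r / Real.log (1 + x i₀) * (x i₀ / (1 + x i₀)))) from by
        field_simp [hρ.ne', hm.ne', (hx1 i₀).ne']]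
      ring
    -- rewrite the sup in the goal
    rw [hS]
    have hsup2 : (⨆ i, (1 + ρ⁻¹ * Real.log r / Real.log (1 + x i₀) * (x i / (1 + x i))))
        = Jt i₀ := by
      refine le_antisymm (ciSup_le fun j => ?_)
        (le_ciSup (f := fun i => (1 + ρ⁻¹ * Real.log r / Real.log (1 + x i₀) * (x i / (1 + x i))))
          (Set.Finite.bddAbove (Set.finite_range _)) i₀)
      have hfrac : x j / (1 + x j) ≤ x i₀ / (1 + x i₀) := by
        rcases eq_or_ne j i₀ with h | h
        · rw [h]
        · rw [div_le_div_iff₀ (hx1 j) (hx1 i₀)]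
          nlinarith [hmax j h]
      have hcoef : 0 ≤ ρ⁻¹ * Real.log r / Real.log (1 + x i₀) :=
        div_nonneg (mul_nonneg (inv_nonneg.mpr hρ.le) hc.le) hm.le
      simp only [hJt_def]
      nlinarith [mul_le_mul_of_nonneg_left hfrac hcoef]
    have hpow : r ^ (∑ i, Real.log (1 + x i) / (ρ * Real.log (1 + x i₀))) = ∏ i, E i := by
      rw [Real.rpow_def_of_pos hr0, Finset.mul_sum, Real.exp_sum]
      refine Finset.prod_congr rfl fun i _ => ?_
      simp only [hE_def]
      congr 1
      ring
    have hprodJt : (∏ i, (1 + ρ⁻¹ * Real.log r / Real.log (1 + x i₀) * (x i / (1 + x i))))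
        = ∏ i, Jt i := by
      exact Finset.prod_congr rfl fun i _ => rfl
    rw [hsup2, hpow, hprodJt, hdet, hdetA]
    rw [← Finset.mul_prod_erase Finset.univ (fun j => A j j) (Finset.mem_univ i₀), hAi₀]
    rw [Finset.prod_congr rfl (fun j hj => hAii j (Finset.ne_of_mem_erase hj))]
    rw [← Finset.mul_prod_erase Finset.univ Jt (Finset.mem_univ i₀),
        ← Finset.mul_prod_erase Finset.univ E (Finset.mem_univ i₀)]
    have hprodpos : 0 < ∏ j ∈ Finset.univ.erase i₀, (E j * Jt j) :=
      Finset.prod_pos fun j _ => mul_pos (hEpos j) (hJtpos j)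
    rw [abs_of_pos (mul_pos (hEpos i₀) hprodpos)]
    rw [Finset.prod_mul_distrib]
    field_simp [(hJtpos i₀).ne']
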